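/- Let λ, ρ, m, k be real numbers with λ, ρ, m, k > 0, and let i denote the imaginary unit. Then the two complex roots of z² − i·(ρ + 1)·λ·z − (ρ·λ² − m·k²) = 0 are purely imaginary, namely z = i·((1 + ρ)·λ ± √((1 − ρ)²·λ² + 4·m·k²))/2, and the root of maximal modulus has modulus ((1 + ρ)·λ + √((1 − ρ)²·λ² + 4·m·k²))/2. -/

import Mathlib

/-- For `λ, ρ, m, k > 0`, the two complex roots of
`z² - i(ρ+1)λz - (ρλ² - mk²) = 0` are purely imaginary, namely
`z = i((1+ρ)λ ± √((1-ρ)²λ² + 4mk²))/2`, and the root of maximal modulus has modulus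
`((1+ρ)λ + √((1-ρ)²λ² + 4mk²))/2`. -/
theorem complex_model_dominant_root (lam ρ m k : ℝ)
    (hlam : 0 < lam) (hρ : 0 < ρ) (hm : 0 < m) (hk : 0 < k) :
    ∃ z₁ z₂ : ℂ,
      z₁ = Complex.I * ((((1 + ρ) * lam +
          Real.sqrt ((1 - ρ) ^ 2 * lam ^ 2 + 4 * m * k ^ 2)) / 2 : ℝ) : ℂ) ∧
      z₂ = Complex.I * ((((1 + ρ) * lam -
          Real.sqrt ((1 - ρ) ^ 2 * lam ^ 2 + 4 * m * k ^ 2)) / 2 : ℝ) : ℂ) ∧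
      (∀ z : ℂ, z ^ 2 - Complex.I * (((ρ + 1) * lam : ℝ) : ℂ) * z
          - (((ρ * lam ^ 2 - m * k ^ 2 : ℝ)) : ℂ) = 0 ↔ z = z₁ ∨ z = z₂) ∧
      z₁.re = 0 ∧ z₂.re = 0 ∧
      ‖z₂‖ ≤ ‖z₁‖ ∧
      ‖z₁‖ =
        ((1 + ρ) * lam + Real.sqrt ((1 - ρ) ^ 2 * lam ^ 2 + 4 * m * k ^ 2)) / 2 := by
  set D : ℝ := (1 - ρ) ^ 2 * lam ^ 2 + 4 * m * k ^ 2 with hD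
  have hD0 : 0 ≤ D := by positivity
  set s : ℝ := Real.sqrt D with hs
  have hs0 : 0 ≤ s := Real.sqrt_nonneg D
  have hs2 : s ^ 2 = D := Real.sq_sqrt hD0
  set a : ℝ := ((1 + ρ) * lam + s) / 2 with ha
  set b : ℝ := ((1 + ρ) * lam - s) / 2 with hb
  refine ⟨Complex.I * (a : ℂ), Complex.I * (b : ℂ), rfl, rfl, ?_, ?_, ?_, ?_, ?_⟩
  · intro z
    have key : z ^ 2 - Complex.I * (((ρ + 1) * lam : ℝ) : ℂ) * z
        - (((ρ * lam ^ 2 - m * k ^ 2 : ℝ)) : ℂ)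
        = (z - Complex.I * (a : ℂ)) * (z - Complex.I * (b : ℂ)) := by
      have hab : (a : ℂ) * (b : ℂ) = ((ρ * lam ^ 2 - m * k ^ 2 : ℝ) : ℂ) := by
        have : a * b = ρ * lam ^ 2 - m * k ^ 2 := by
          rw [ha, hb]
          have : s ^ 2 = (1 - ρ) ^ 2 * lam ^ 2 + 4 * m * k ^ 2 := hs2
          nlinarith [this]
        push_cast [← this]; ring
      have hsum : (a : ℂ) + (b : ℂ) = (((ρ + 1) * lam : ℝ) : ℂ) := by
        push_cast [ha, hb]; ring
      have hI : Complex.I ^ 2 = -1 := Complex.I_sq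
      calc z ^ 2 - Complex.I * (((ρ + 1) * lam : ℝ) : ℂ) * z
            - (((ρ * lam ^ 2 - m * k ^ 2 : ℝ)) : ℂ)
          = z ^ 2 - Complex.I * ((a : ℂ) + (b : ℂ)) * z
            - (a : ℂ) * (b : ℂ) := by rw [hsum, hab]
        _ = (z - Complex.I * (a : ℂ)) * (z - Complex.I * (b : ℂ)) := by
            linear_combination (-(a : ℂ) * (b : ℂ)) * hI
    rw [key, mul_eq_zero, sub_eq_zero, sub_eq_zero]
  · simp
  · simp
  · rw [norm_mul, norm_mul, Complex.norm_I, Complex.norm_real, Complex.norm_real, Real.norm_eq_abs, Real.norm_eq_abs]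
    have : |b| ≤ a := by
      rw [abs_le]
      constructor <;> [skip; skip] <;> rw [ha, hb] <;> nlinarith [mul_pos hρ hlam]
    have ha0 : 0 ≤ a := le_trans (abs_nonneg b) this
    rw [abs_of_nonneg ha0] at *
    simpa using this
  · rw [norm_mul, Complex.norm_I, Complex.norm_real, one_mul, Real.norm_eq_abs, abs_of_nonneg]
    rw [ha]; positivity
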